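/- For all constants α > 0 and ε > 0 there exists a constant K = K(α, ε) such that the following holds. Let G ∼ 𝔾(n, K/n) and let ψ be the random edge-colouring assigning each edge of G a colour chosen independently and uniformly at random from {1, …, ⌈(1+α)·n⌉}. Then asymptotically almost surely G contains a path of length at least (1 − ε)·n whose edges receive pairwise distinct colours under ψ. -/

import Mathlib

open MeasureTheory

/-- The graph on `Fin n` determined by an indicator function on pairs:
the edge `e` is present iff `f e = true` (loops are discarded). -/
def graphOf {n : ℕ} (f : Sym2 (Fin n) → Bool) : SimpleGraph (Fin n) :=
  SimpleGraph.fromEdgeSet {e | f e = true}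

/-- The Bernoulli measure on `Bool` with success probability `p`. -/
noncomputable def bernoulliMeasure (p : ℝ) : Measure Bool :=
  ENNReal.ofReal p • Measure.dirac true + ENNReal.ofReal (1 - p) • Measure.dirac false

/-- The distribution of the binomial random graph `𝔾(n,p)`, encoded as the product of
independent Bernoulli(`p`) coordinates, one for each potential edge. -/
noncomputable def graphMeasure (n : ℕ) (p : ℝ) : Measure (Sym2 (Fin n) → Bool) :=
  Measure.pi fun _ => bernoulliMeasure p

/-- The distribution of a uniformly random colouring of all pairs of vertices of `Fin n`
with colours from `Fin r`: the product of independent uniform colours. -/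
noncomputable def colourMeasure (n r : ℕ) : Measure (Sym2 (Fin n) → Fin r) :=
  Measure.pi fun _ => (r : ENNReal)⁻¹ • Measure.count

/-- `G` has a path of length at least `L` whose edges get pairwise distinct colours
under `ψ`. -/
def HasRainbowPath {n : ℕ} {C : Type*} (G : SimpleGraph (Fin n))
    (ψ : Sym2 (Fin n) → C) (L : ℝ) : Prop :=
  ∃ (u v : Fin n) (w : G.Walk u v),
    w.IsPath ∧ L ≤ (w.length : ℝ) ∧ (w.edges.map ψ).Nodup

/-! ### Deterministic part: rainbow DFS -/

section DFS

variable {V κ : Type*} [Fintype V] [DecidableEq V] [DecidableEq κ]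
  (G : SimpleGraph V) (ψ : Sym2 V → κ)

/-- Invariant state of the rainbow DFS process. -/
def RState (t : ℕ) : Prop :=
  ∃ (S T : Finset V) (C : Finset κ),
    T.card = t ∧ C.card + T.card ≤ Fintype.card V ∧
    Disjoint S T ∧
    (∀ a ∈ S, ∀ b ∈ T, G.Adj a b → ψ s(a, b) ∈ C) ∧
    ((S ∪ T = Finset.univ) ∨
      ∃ (u v : V) (w : G.Walk u v), w.IsPath ∧
        (∀ x, x ∈ w.support ↔ x ∉ S ∪ T) ∧
        (w.edges.map ψ).Nodup ∧ (∀ e ∈ w.edges, ψ e ∈ C))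

lemma rstate_init : RState G ψ (Fintype.card V) := by
  refine ⟨∅, Finset.univ, ∅, ?_, ?_, ?_, ?_, Or.inl ?_⟩ <;> simp

lemma rstate_descend (t : ℕ) (h : RState G ψ (t + 1)) : RState G ψ t := by
  obtain ⟨S, T, C, hT, hCT, hST, hinv, hbr⟩ := h
  have main : ∀ (k : ℕ) (S : Finset V) (C : Finset κ), (Finset.univ \ S).card = k →
      C.card + T.card ≤ Fintype.card V → Disjoint S T →
      (∀ a ∈ S, ∀ b ∈ T, G.Adj a b → ψ s(a, b) ∈ C) →
      ((S ∪ T = Finset.univ) ∨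
        ∃ (u v : V) (w : G.Walk u v), w.IsPath ∧
          (∀ x, x ∈ w.support ↔ x ∉ S ∪ T) ∧
          (w.edges.map ψ).Nodup ∧ (∀ e ∈ w.edges, ψ e ∈ C)) →
      RState G ψ t := by
    intro k
    induction k using Nat.strong_induction_on with
    | _ k IH =>
      intro S C hk hCT hST hinv hbr
      have hTne : T.Nonempty := Finset.card_pos.mp (by omega)
      rcases hbr with hun | ⟨u, v, w, hp, hcov, hnd, hsub⟩
      · -- stack empty : start a new path at some vertex of T
        obtain ⟨b, hb⟩ := hTne
        have hbS : b ∉ S := Finset.disjoint_right.mp hST hb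
        refine ⟨S, T.erase b, C, by rw [Finset.card_erase_of_mem hb, hT]; omega, by
            have := Finset.card_erase_le (s := T) (a := b); omega,
          hST.mono_right (Finset.erase_subset _ _),
          fun a ha b' hb' hadj => hinv a ha b' (Finset.mem_of_mem_erase hb') hadj,
          Or.inr ⟨b, b, SimpleGraph.Walk.nil, SimpleGraph.Walk.IsPath.nil, ?_, by simp, by simp⟩⟩
        intro x
        simp only [SimpleGraph.Walk.support_nil, List.mem_singleton, Finset.mem_union,
          Finset.mem_erase]
        constructor
        · rintro rfl
          push_neg
          exact ⟨hbS, fun h => absurd rfl h⟩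
        · intro hx
          push_neg at hx
          by_contra hne
          have : x ∈ S ∪ T := hun ▸ Finset.mem_univ x
          rcases Finset.mem_union.mp this with h1 | h1
          · exact hx.1 h1
          · exact (hx.2 hne) h1
      · by_cases hpush : ∃ b ∈ T, G.Adj u b ∧ ψ s(u, b) ∉ C
        · -- push b on top of the stack
          obtain ⟨b, hb, hadj, hcol⟩ := hpush
          have hbsup : b ∉ w.support := by
            intro h
            exact (hcov b).mp h (Finset.mem_union_right _ hb)
          have hswap : s(b, u) = s(u, b) := Sym2.eq_swap
          refine ⟨S, T.erase b, insert (ψ s(u, b)) C,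
            by rw [Finset.card_erase_of_mem hb, hT]; omega, by
              have h1 := Finset.card_insert_le (ψ s(u, b)) C
              have h2 := Finset.card_erase_of_mem hb
              omega,
            hST.mono_right (Finset.erase_subset _ _),
            fun a ha b' hb' hadj' => Finset.mem_insert_of_mem
              (hinv a ha b' (Finset.mem_of_mem_erase hb') hadj'),
            Or.inr ⟨b, v, SimpleGraph.Walk.cons hadj.symm w,
              (SimpleGraph.Walk.cons_isPath_iff _ _).mpr ⟨hp, hbsup⟩, ?_, ?_, ?_⟩⟩
          · intro x
            simp only [SimpleGraph.Walk.support_cons, List.mem_cons, Finset.mem_union,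
              Finset.mem_erase]
            constructor
            · rintro (rfl | hxw)
              · push_neg
                exact ⟨Finset.disjoint_right.mp hST hb, fun h => absurd rfl h⟩
              · have := (hcov x).mp hxw
                push_neg
                exact ⟨fun h => absurd (Finset.mem_union_left _ h) this,
                  fun _ h => absurd (Finset.mem_union_right _ h) this⟩
            · intro hx
              push_neg at hx
              by_cases hxb : x = b
              · exact Or.inl hxb
              · refine Or.inr ((hcov x).mpr ?_)
                intro h
                rcases Finset.mem_union.mp h with h1 | h1
                · exact hx.1 h1
                · exact (hx.2 hxb) h1
          · rw [SimpleGraph.Walk.edges_cons, List.map_cons, List.nodup_cons]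
            refine ⟨fun h => ?_, hnd⟩
            rw [hswap] at h
            obtain ⟨e, he, heq⟩ := List.mem_map.mp h
            exact hcol (heq ▸ hsub e he)
          · intro e he
            rw [SimpleGraph.Walk.edges_cons] at he
            rcases List.mem_cons.mp he with rfl | he
            · rw [hswap]; exact Finset.mem_insert_self _ _
            · exact Finset.mem_insert_of_mem (hsub e he)
        · -- pop u from the stack into S
          push_neg at hpush
          have huS : u ∉ S ∪ T := (hcov u).mp w.start_mem_support
          have huS' : u ∉ S := fun h => huS (Finset.mem_union_left _ h)
          have hkpos : u ∈ Finset.univ \ S := by simp [huS']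
          have hcard : (Finset.univ \ insert u S).card < k := by
            have he : Finset.univ \ insert u S = (Finset.univ \ S).erase u := by
              ext x
              simp only [Finset.mem_sdiff, Finset.mem_insert, Finset.mem_erase,
                Finset.mem_univ, true_and]
              tauto
            have hkpos' : 0 < k := hk ▸ Finset.card_pos.mpr ⟨u, hkpos⟩
            rw [he, Finset.card_erase_of_mem hkpos, hk]
            omega
          refine IH _ hcard (insert u S) C rfl hCT ?_ ?_ ?_
          · exact Finset.disjoint_insert_left.mpr
              ⟨fun h => huS (Finset.mem_union_right _ h), hST⟩
          · intro a ha b hb hadj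
            rcases Finset.mem_insert.mp ha with rfl | ha
            · exact hpush b hb hadj
            · exact hinv a ha b hb hadj
          · cases w with
            | nil =>
              left
              ext x
              simp only [Finset.mem_union, Finset.mem_insert, Finset.mem_univ, iff_true]
              by_cases hx : x ∈ S ∪ T
              · rcases Finset.mem_union.mp hx with h1 | h1
                · exact Or.inl (Or.inr h1)
                · exact Or.inr h1
              · have := (hcov x).mpr hx
                simp only [SimpleGraph.Walk.support_nil, List.mem_singleton] at this
                exact Or.inl (Or.inl this)
            | cons hadj' w' =>
              right
              rename_i u'
              refine ⟨u', v, w', (SimpleGraph.Walk.cons_isPath_iff _ _ |>.mp hp).1, ?_, ?_, ?_⟩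
              · intro x
                have hx := hcov x
                have hu : u ∉ w'.support := (SimpleGraph.Walk.cons_isPath_iff _ _ |>.mp hp).2
                simp only [SimpleGraph.Walk.support_cons, List.mem_cons] at hx
                simp only [Finset.mem_union, Finset.mem_insert]
                constructor
                · intro hxw
                  have hne : x ≠ u := fun h => hu (h ▸ hxw)
                  have := hx.mp (Or.inr hxw)
                  push_neg
                  exact ⟨⟨hne, fun h => (this (Finset.mem_union_left _ h)).elim⟩,
                    fun h => (this (Finset.mem_union_right _ h)).elim⟩
                · intro hxn
                  push_neg at hxn
                  rcases hx.mpr (fun h => by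
                    rcases Finset.mem_union.mp h with h1 | h1
                    · exact hxn.1.2 h1
                    · exact hxn.2 h1) with h1 | h1
                  · exact absurd h1 hxn.1.1
                  · exact h1
              · have := hnd
                rw [SimpleGraph.Walk.edges_cons, List.map_cons, List.nodup_cons] at this
                exact this.2
              · intro e he
                exact hsub e (by
                  rw [SimpleGraph.Walk.edges_cons]; exact List.mem_cons_of_mem _ he)
  exact main _ S C rfl hCT hST hinv hbr

lemma rstate_final (s : ℕ) (hs : 1 ≤ s) (h : RState G ψ s)
    (hprop : ∀ (A B : Finset V) (C : Finset κ), A.card = s → B.card = s →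
      Disjoint A B → C.card ≤ Fintype.card V →
      ∃ a ∈ A, ∃ b ∈ B, G.Adj a b ∧ ψ s(a, b) ∉ C) :
    ∃ (u v : V) (w : G.Walk u v), w.IsPath ∧ (w.edges.map ψ).Nodup ∧
      Fintype.card V ≤ w.length + 2 * s := by
  obtain ⟨S, T, C, hT, hCT, hST, hinv, hbr⟩ := h
  have hTne : T.Nonempty := Finset.card_pos.mp (by omega)
  have hScard : S.card < s := by
    by_contra hge
    push_neg at hge
    obtain ⟨A, hAS, hA⟩ := Finset.exists_subset_card_eq hge
    obtain ⟨a, ha, b, hb, hadj, hcol⟩ :=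
      hprop A T C hA hT (hST.mono_left hAS) (by omega)
    exact hcol (hinv a (hAS ha) b hb hadj)
  rcases hbr with hun | ⟨u, v, w, hp, hcov, hnd, _⟩
  · obtain ⟨x, hx⟩ := hTne
    refine ⟨x, x, SimpleGraph.Walk.nil, SimpleGraph.Walk.IsPath.nil, by simp, ?_⟩
    have : Fintype.card V = (S ∪ T).card := by rw [hun]; simp [Finset.card_univ]
    have hc := Finset.card_union_le S T
    omega
  · refine ⟨u, v, w, hp, hnd, ?_⟩
    have hdisj : Disjoint (S ∪ T) w.support.toFinset := by
      rw [Finset.disjoint_right]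
      intro x hx
      simp only [List.mem_toFinset] at hx
      exact (hcov x).mp hx
    have hcover : (S ∪ T) ∪ w.support.toFinset = Finset.univ := by
      ext x
      simp only [Finset.mem_union, Finset.mem_univ, iff_true, List.mem_toFinset]
      by_cases hx : x ∈ S ∪ T
      · left; exact Finset.mem_union.mp hx
      · right; exact (hcov x).mpr hx
    have hcard : Fintype.card V = (S ∪ T).card + w.support.toFinset.card := by
      rw [← Finset.card_union_of_disjoint hdisj, hcover, Finset.card_univ]
    have hsup : w.support.toFinset.card = w.length + 1 := by
      rw [List.toFinset_card_of_nodup hp.support_nodup, SimpleGraph.Walk.length_support]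
    have hc2 := Finset.card_union_le S T
    omega

/-- The deterministic rainbow-DFS theorem. -/
lemma exists_rainbow_path (s : ℕ) (hs : 1 ≤ s) (hsn : s ≤ Fintype.card V)
    (hprop : ∀ (A B : Finset V) (C : Finset κ), A.card = s → B.card = s →
      Disjoint A B → C.card ≤ Fintype.card V →
      ∃ a ∈ A, ∃ b ∈ B, G.Adj a b ∧ ψ s(a, b) ∉ C) :
    ∃ (u v : V) (w : G.Walk u v), w.IsPath ∧ (w.edges.map ψ).Nodup ∧
      Fintype.card V ≤ w.length + 2 * s := by
  have key : ∀ m, RState G ψ (Fintype.card V - m) := by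
    intro m
    induction m with
    | zero => simpa using rstate_init G ψ
    | succ m ih =>
      rcases Nat.lt_or_ge m (Fintype.card V) with h | h
      · have heq : Fintype.card V - m = (Fintype.card V - (m + 1)) + 1 := by omega
        exact rstate_descend G ψ _ (heq ▸ ih)
      · have heq : Fintype.card V - (m + 1) = Fintype.card V - m := by omega
        rw [heq]; exact ih
  have h := key (Fintype.card V - s)
  rw [Nat.sub_sub_self hsn] at h
  exact rstate_final G ψ s hs h hprop

end DFS

/-! ### Measure machinery -/


lemma allMeasurable {X : Type*} [MeasurableSpace X] [Countable X]
    [MeasurableSingletonClass X] (s : Set X) : MeasurableSet s :=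
  s.to_countable.measurableSet


variable {ι : Type*} [Fintype ι] {X Y : ι → Type*} [∀ i, Fintype (X i)] [∀ i, Fintype (Y i)]
  [∀ i, MeasurableSpace (X i)] [∀ i, MeasurableSpace (Y i)]
  [∀ i, MeasurableSingletonClass (X i)] [∀ i, MeasurableSingletonClass (Y i)]

/-- The product of two pi-measures is the pushforward of the pi-measure of products. -/
lemma prod_pi_eq_map (μ : ∀ i, Measure (X i)) (ν : ∀ i, Measure (Y i))
    [∀ i, SigmaFinite (μ i)] [∀ i, SigmaFinite (ν i)] :
    (Measure.pi μ).prod (Measure.pi ν) =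
      Measure.map (fun h => (fun i => (h i).1, fun i => (h i).2))
        (Measure.pi (fun i => (μ i).prod (ν i))) := by
  apply MeasureTheory.Measure.ext_of_singleton
  rintro ⟨f, g⟩
  have h1 : ({(f, g)} : Set ((∀ i, X i) × (∀ i, Y i))) = {f} ×ˢ {g} := by
    ext; simp [Prod.ext_iff]
  have h2 : (fun (h : ∀ i, X i × Y i) => ((fun i => (h i).1, fun i => (h i).2) :
      (∀ i, X i) × (∀ i, Y i))) ⁻¹' {(f, g)} = Set.pi Set.univ (fun i => {(f i, g i)}) := by
    ext h
    simp only [Set.mem_preimage, Set.mem_singleton_iff, Prod.ext_iff, funext_iff,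
      Set.mem_pi, Set.mem_univ, forall_const]
    exact forall_and.symm
  have hL : (Measure.pi μ).prod (Measure.pi ν) {(f, g)} =
      (∏ i, (μ i) {f i}) * ∏ i, (ν i) {g i} := by
    rw [h1, Measure.prod_prod, ← Set.univ_pi_singleton f, ← Set.univ_pi_singleton g,
      Measure.pi_pi, Measure.pi_pi]
  have hR : Measure.map (fun (h : ∀ i, X i × Y i) =>
        ((fun i => (h i).1, fun i => (h i).2) : (∀ i, X i) × (∀ i, Y i)))
      (Measure.pi (fun i => (μ i).prod (ν i))) {(f, g)} =
      ∏ i, ((μ i) {f i} * (ν i) {g i}) := by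
    rw [Measure.map_apply (measurable_of_countable _) (measurableSet_singleton _), h2,
      Measure.pi_pi]
    refine Finset.prod_congr rfl fun i _ => ?_
    have : ({(f i, g i)} : Set (X i × Y i)) = {f i} ×ˢ {g i} := by ext; simp [Prod.ext_iff]
    rw [this, Measure.prod_prod]
  rw [hL, hR, Finset.prod_mul_distrib]

/-- Box formula for the product of two pi-measures. -/
lemma prod_pi_box (μ : ∀ i, Measure (X i)) (ν : ∀ i, Measure (Y i))
    [∀ i, SigmaFinite (μ i)] [∀ i, SigmaFinite (ν i)] (T : ∀ i, Set (X i × Y i)) :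
    (Measure.pi μ).prod (Measure.pi ν) {fg | ∀ i, ((fg.1 i, fg.2 i) ∈ T i)} =
      ∏ i, (μ i).prod (ν i) (T i) := by
  rw [prod_pi_eq_map μ ν,
    Measure.map_apply (measurable_of_countable _) (allMeasurable _)]
  have : (fun (h : ∀ i, X i × Y i) => ((fun i => (h i).1, fun i => (h i).2) :
      (∀ i, X i) × (∀ i, Y i))) ⁻¹' {fg | ∀ i, ((fg.1 i, fg.2 i) ∈ T i)} =
      Set.pi Set.univ T := by
    ext h
    simp
  rw [this, Measure.pi_pi]

/-! ### Probability computations -/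

instance (p : ℝ) : IsFiniteMeasure (bernoulliMeasure p) := by
  constructor
  simp only [bernoulliMeasure, Measure.add_apply, Measure.smul_apply, smul_eq_mul]
  finiteness

instance (r : ℕ) : IsFiniteMeasure ((r : ENNReal)⁻¹ • (Measure.count : Measure (Fin r))) := by
  constructor
  simp only [Measure.smul_apply, smul_eq_mul, Measure.count_univ, ENat.card_eq_coe_fintype_card,
    ENat.toENNReal_coe, Fintype.card_fin]
  rcases Nat.eq_zero_or_pos r with rfl | hr
  · simp
  · exact ENNReal.mul_lt_top
      (ENNReal.inv_lt_top.mpr (by exact_mod_cast hr)) (by finiteness)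

lemma bern_prob {p : ℝ} (h0 : 0 ≤ p) (h1 : p ≤ 1) :
    IsProbabilityMeasure (bernoulliMeasure p) := by
  constructor
  simp only [bernoulliMeasure, Measure.add_apply, Measure.smul_apply, smul_eq_mul,
    measure_univ, mul_one]
  rw [← ENNReal.ofReal_add h0 (by linarith)]
  norm_num

lemma colour_prob {r : ℕ} (hr : r ≠ 0) :
    IsProbabilityMeasure ((r : ENNReal)⁻¹ • (Measure.count : Measure (Fin r))) := by
  constructor
  simp only [Measure.smul_apply, smul_eq_mul, Measure.count_univ, ENat.card_eq_coe_fintype_card,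
    ENat.toENNReal_coe, Fintype.card_fin]
  exact ENNReal.inv_mul_cancel (by exact_mod_cast hr) (by finiteness)

lemma bern_true {p : ℝ} : bernoulliMeasure p {true} = ENNReal.ofReal p := by
  simp [bernoulliMeasure, Measure.dirac_apply]

lemma colour_compl {r : ℕ} (C : Finset (Fin r)) :
    ((r : ENNReal)⁻¹ • (Measure.count : Measure (Fin r))) ((↑C)ᶜ) =
      ((r - C.card : ℕ) : ENNReal) * (r : ENNReal)⁻¹ := by
  rw [← Finset.coe_compl, Measure.smul_apply, Measure.count_apply_finset, smul_eq_mul,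
    Finset.card_compl, Fintype.card_fin, mul_comm]

/-- measure of the per-coordinate bad set -/
lemma pair_bad {p : ℝ} (h0 : 0 ≤ p) (h1 : p ≤ 1) {r : ℕ} (hr : r ≠ 0) (C : Finset (Fin r)) :
    ((bernoulliMeasure p).prod ((r : ENNReal)⁻¹ • (Measure.count : Measure (Fin r))))
      {x | ¬(x.1 = true ∧ x.2 ∉ C)} =
      1 - ENNReal.ofReal (p * ((r - C.card : ℕ) / r)) := by
  haveI := bern_prob h0 h1
  haveI := colour_prob hr
  have hset : {x : Bool × Fin r | ¬(x.1 = true ∧ x.2 ∉ C)} =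
      ({true} ×ˢ (↑C)ᶜ : Set (Bool × Fin r))ᶜ := by
    ext ⟨b, c⟩
    simp only [Set.mem_setOf_eq, Set.mem_compl_iff, Set.mem_prod, Set.mem_singleton_iff]
    tauto
  rw [hset, measure_compl (Set.to_countable _).measurableSet (measure_ne_top _ _),
    measure_univ, Measure.prod_prod, bern_true, colour_compl]
  congr 1
  rw [ENNReal.ofReal_mul h0]
  congr 1
  rw [ENNReal.ofReal_div_of_pos (Nat.cast_pos.mpr (Nat.pos_of_ne_zero hr)),
    ENNReal.ofReal_natCast, ENNReal.ofReal_natCast, div_eq_mul_inv]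

-- new part
def BadSet (n r : ℕ) (A B : Finset (Fin n)) (C : Finset (Fin r)) :
    Set ((Sym2 (Fin n) → Bool) × (Sym2 (Fin n) → Fin r)) :=
  {ω | ∀ a ∈ A, ∀ b ∈ B, ¬(ω.1 s(a, b) = true ∧ ω.2 s(a, b) ∉ C)}

lemma sym2_image_card {n : ℕ} (A B : Finset (Fin n)) (hd : Disjoint A B) :
    ((A ×ˢ B).image (fun ab => s(ab.1, ab.2))).card = A.card * B.card := by
  rw [Finset.card_image_of_injOn, Finset.card_product]
  rintro ⟨a, b⟩ hab ⟨a', b'⟩ hab' h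
  simp only [Finset.mem_coe, Finset.mem_product] at hab hab'
  simp only at h
  rcases Sym2.eq_iff.mp h with ⟨rfl, rfl⟩ | ⟨h1, h2⟩
  · rfl
  · have haB : a ∈ B := by rw [h1]; exact hab'.2
    exact absurd (Finset.disjoint_right.mp hd haB hab.1) (fun h => h)

lemma badset_measure {n r : ℕ} {p : ℝ} (h0 : 0 ≤ p) (h1 : p ≤ 1) (hr : r ≠ 0)
    (A B : Finset (Fin n)) (C : Finset (Fin r)) (hd : Disjoint A B) :
    (graphMeasure n p).prod (colourMeasure n r) (BadSet n r A B C) =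
      (1 - ENNReal.ofReal (p * ((r - C.card : ℕ) / r))) ^ (A.card * B.card) := by
  haveI := bern_prob h0 h1
  haveI := colour_prob (r := r) hr
  classical
  set E := (A ×ˢ B).image (fun ab => s(ab.1, ab.2)) with hE
  set Tb : Set (Bool × Fin r) := {x | ¬(x.1 = true ∧ x.2 ∉ C)} with hTb
  have hset : BadSet n r A B C =
      {fg : (Sym2 (Fin n) → Bool) × (Sym2 (Fin n) → Fin r) |
        ∀ e, ((fg.1 e, fg.2 e) ∈ (if e ∈ E then Tb else Set.univ))} := by
    ext ω
    simp only [BadSet, Set.mem_setOf_eq]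
    constructor
    · intro h e
      by_cases he : e ∈ E
      · simp only [he, if_true]
        obtain ⟨⟨a, b⟩, hab, rfl⟩ := Finset.mem_image.mp he
        simp only [Finset.mem_product] at hab
        exact h a hab.1 b hab.2
      · simp [he]
    · intro h a ha b hb
      have he : s(a, b) ∈ E := Finset.mem_image.mpr ⟨(a, b), Finset.mem_product.mpr ⟨ha, hb⟩, rfl⟩
      have := h s(a, b)
      rw [if_pos he] at this
      exact this
  rw [hset]
  show (Measure.pi fun _ => bernoulliMeasure p).prod
      (Measure.pi fun _ => (r : ENNReal)⁻¹ • (Measure.count : Measure (Fin r))) _ = _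
  rw [prod_pi_box]
  have : ∀ e : Sym2 (Fin n),
      (bernoulliMeasure p).prod ((r : ENNReal)⁻¹ • (Measure.count : Measure (Fin r)))
        (if e ∈ E then Tb else Set.univ) =
      (if e ∈ E then (1 - ENNReal.ofReal (p * ((r - C.card : ℕ) / r))) else 1) := by
    intro e
    by_cases he : e ∈ E
    · rw [if_pos he, if_pos he, hTb, pair_bad h0 h1 hr]
    · rw [if_neg he, if_neg he, measure_univ]
  rw [Finset.prod_congr rfl (fun e _ => this e), Finset.prod_ite_mem, Finset.univ_inter,
    Finset.prod_const, sym2_image_card A B hd]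

/-! ### The good event and the union bound -/

def GoodEvent (n r s : ℕ) : Set ((Sym2 (Fin n) → Bool) × (Sym2 (Fin n) → Fin r)) :=
  {ω | ∀ (A B : Finset (Fin n)) (C : Finset (Fin r)), A.card = s → B.card = s →
    Disjoint A B → C.card ≤ n → ∃ a ∈ A, ∃ b ∈ B, ω.1 s(a, b) = true ∧ ω.2 s(a, b) ∉ C}

lemma goodEvent_subset {n r s : ℕ} {ε : ℝ} (hs : 1 ≤ s) (hsn : s ≤ n)
    (hL : (1 - ε) * n ≤ (n : ℝ) - 2 * s) :
    GoodEvent n r s ⊆ {ω : (Sym2 (Fin n) → Bool) × (Sym2 (Fin n) → Fin r) |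
      HasRainbowPath (graphOf ω.1) ω.2 ((1 - ε) * n)} := by
  intro ω hω
  have hprop : ∀ (A B : Finset (Fin n)) (C : Finset (Fin r)), A.card = s → B.card = s →
      Disjoint A B → C.card ≤ Fintype.card (Fin n) →
      ∃ a ∈ A, ∃ b ∈ B, (graphOf ω.1).Adj a b ∧ ω.2 s(a, b) ∉ C := by
    intro A B C hA hB hd hC
    rw [Fintype.card_fin] at hC
    obtain ⟨a, ha, b, hb, h1, h2⟩ := hω A B C hA hB hd hC
    refine ⟨a, ha, b, hb, ?_, h2⟩
    rw [graphOf, SimpleGraph.fromEdgeSet_adj]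
    refine ⟨h1, fun hab => ?_⟩
    exact Finset.disjoint_left.mp hd ha (hab ▸ hb)
  obtain ⟨u, v, w, hp, hnd, hlen⟩ :=
    exists_rainbow_path (graphOf ω.1) ω.2 s hs (by rwa [Fintype.card_fin]) hprop
  refine ⟨u, v, w, hp, ?_, hnd⟩
  rw [Fintype.card_fin] at hlen
  have hlen' : (n : ℝ) ≤ (w.length : ℝ) + 2 * s := by exact_mod_cast hlen
  linarith

lemma good_compl_bound {n r s : ℕ} {p : ℝ} (h0 : 0 ≤ p) (h1 : p ≤ 1) (hr : r ≠ 0)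
    (hnr : n ≤ r) :
    (graphMeasure n p).prod (colourMeasure n r) ((GoodEvent n r s)ᶜ) ≤
      ((2 ^ n * 2 ^ n * 2 ^ r : ℕ) : ENNReal) *
        (1 - ENNReal.ofReal (p * (((r : ℝ) - n) / r))) ^ (s * s) := by
  classical
  set μ := (graphMeasure n p).prod (colourMeasure n r) with hμ
  set v := (1 - ENNReal.ofReal (p * (((r : ℝ) - n) / r))) ^ (s * s) with hv
  set 𝒯 : Finset (Finset (Fin n) × Finset (Fin n) × Finset (Fin r)) :=
    Finset.univ.filter
      (fun x => x.1.card = s ∧ x.2.1.card = s ∧ Disjoint x.1 x.2.1 ∧ x.2.2.card ≤ n) with h𝒯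
  have hsub : (GoodEvent n r s)ᶜ ⊆ ⋃ x ∈ 𝒯, BadSet n r x.1 x.2.1 x.2.2 := by
    intro ω hω
    simp only [Set.mem_compl_iff, GoodEvent, Set.mem_setOf_eq] at hω
    push_neg at hω
    obtain ⟨A, B, C, hA, hB, hd, hC, hbad⟩ := hω
    have hmem : (A, B, C) ∈ 𝒯 :=
      Finset.mem_filter.mpr ⟨Finset.mem_univ _, hA, hB, hd, hC⟩
    refine Set.mem_biUnion hmem ?_
    intro a ha b hb h
    exact h.2 (hbad a ha b hb h.1)
  refine (measure_mono hsub).trans ((measure_biUnion_finset_le 𝒯 _).trans ?_)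
  have hterm : ∀ x ∈ 𝒯, μ (BadSet n r x.1 x.2.1 x.2.2) ≤ v := by
    rintro ⟨A, B, C⟩ hx
    obtain ⟨-, hA, hB, hd, hC⟩ := Finset.mem_filter.mp hx
    rw [hμ, badset_measure h0 h1 hr A B C hd, hA, hB, hv]
    refine pow_le_pow_left' ?_ _
    refine tsub_le_tsub_left (ENNReal.ofReal_le_ofReal ?_) 1
    have hrpos : (0 : ℝ) < r := by
      exact_mod_cast Nat.pos_of_ne_zero hr
    have hCr : C.card ≤ r := le_trans hC hnr
    have hcast : ((r - C.card : ℕ) : ℝ) = (r : ℝ) - C.card := by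
      push_cast [Nat.cast_sub hCr]
      ring
    refine mul_le_mul_of_nonneg_left ?_ h0
    rw [hcast]
    refine (div_le_div_iff_of_pos_right hrpos).mpr ?_
    have : (C.card : ℝ) ≤ n := by exact_mod_cast hC
    linarith
  refine (Finset.sum_le_card_nsmul 𝒯 _ v hterm).trans ?_
  rw [nsmul_eq_mul]
  refine mul_le_mul_left ?_ v
  have hcard : 𝒯.card ≤ 2 ^ n * 2 ^ n * 2 ^ r := by
    refine (Finset.card_filter_le _ _).trans ?_
    rw [Finset.card_univ]
    simp [Fintype.card_prod, Fintype.card_finset, mul_assoc]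
  exact_mod_cast hcard

/-! ### Numeric helper lemmas -/

lemma graphM_prob {n : ℕ} {p : ℝ} (h0 : 0 ≤ p) (h1 : p ≤ 1) :
    IsProbabilityMeasure (graphMeasure n p) := by
  haveI := bern_prob h0 h1
  rw [graphMeasure]
  exact Measure.pi.instIsProbabilityMeasure (μ := fun _ : Sym2 (Fin n) => bernoulliMeasure p)

lemma colourM_prob {n r : ℕ} (hr : r ≠ 0) : IsProbabilityMeasure (colourMeasure n r) := by
  haveI := colour_prob (r := r) hr
  rw [colourMeasure]
  exact Measure.pi.instIsProbabilityMeasure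
    (μ := fun _ : Sym2 (Fin n) => (r : ENNReal)⁻¹ • Measure.count)

lemma ws_bound {α ε' K x y z : ℝ} (hα : 0 < α) (hε'0 : 0 < ε') (hε'1 : ε' ≤ 1)
    (hK : K = 256 * (1 + α) ^ 2 / (α * ε' ^ 2))
    (hx1 : 1 ≤ x) (hy1 : (1 + α) * x ≤ y) (hy2 : y ≤ (1 + α) * x + 1)
    (hz : ε' * x / 4 ≤ z) (h4 : 4 ≤ ε' * x) :
    3 * x + y ≤ K / x * ((y - x) / y) * (z * z) := by
  have hx0 : 0 < x := by linarith
  have hα1 : (0 : ℝ) < 1 + α := by linarith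
  have hy0 : 0 < y := by nlinarith
  have hyx : x ≤ y := by nlinarith
  have hz0 : 0 ≤ z := le_trans (by positivity) hz
  have hKpos : 0 < K := by rw [hK]; positivity
  have hfrac : α / (2 * (1 + α)) ≤ (y - x) / y := by
    rw [div_le_div_iff₀ (by positivity) hy0]
    nlinarith
  have hw_ge : K * α / (2 * (1 + α) * x) ≤ K / x * ((y - x) / y) := by
    have heq : K / x * (α / (2 * (1 + α))) = K * α / (2 * (1 + α) * x) := by
      field_simp
    rw [← heq]
    exact mul_le_mul_of_nonneg_left hfrac (by positivity)
  have hz2 : (ε' * x / 4) ^ 2 ≤ z * z := by nlinarith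
  have hmul : K * α / (2 * (1 + α) * x) * ((ε' * x / 4) ^ 2) ≤
      K / x * ((y - x) / y) * (z * z) := by
    refine mul_le_mul hw_ge hz2 (by positivity) ?_
    have : 0 ≤ (y - x) / y := div_nonneg (by linarith) (by linarith)
    positivity
  have hval : K * α / (2 * (1 + α) * x) * ((ε' * x / 4) ^ 2) = 8 * (1 + α) * x := by
    rw [hK]
    field_simp
    ring
  rw [hval] at hmul
  nlinarith

lemma ennreal_union_to_exp {n r m : ℕ} {w : ℝ} (hw0 : 0 ≤ w)
    (hws : 3 * (n : ℝ) + r ≤ w * m) :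
    ((2 ^ n * 2 ^ n * 2 ^ r : ℕ) : ENNReal) * (1 - ENNReal.ofReal w) ^ m ≤
      ENNReal.ofReal (Real.exp (-(n : ℝ))) := by
  have step1 : (1 : ENNReal) - ENNReal.ofReal w ≤ ENNReal.ofReal (Real.exp (-w)) := by
    have h1 : (1 : ENNReal) - ENNReal.ofReal w = ENNReal.ofReal (1 - w) := by
      rw [ENNReal.ofReal_sub 1 hw0, ENNReal.ofReal_one]
    rw [h1]
    refine ENNReal.ofReal_le_ofReal ?_
    have := Real.add_one_le_exp (-w)
    linarith
  have step2 : (1 - ENNReal.ofReal w) ^ m ≤ ENNReal.ofReal (Real.exp ((m : ℝ) * (-w))) := by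
    refine (pow_le_pow_left' step1 m).trans ?_
    rw [← ENNReal.ofReal_pow (Real.exp_nonneg _), ← Real.exp_nat_mul]
  have h2e : (2 : ℝ) ≤ Real.exp 1 := by
    have := Real.add_one_le_exp (1 : ℝ); linarith
  have hpow : ∀ k : ℕ, ((2 : ℝ)) ^ k ≤ Real.exp k := by
    intro k
    calc ((2 : ℝ)) ^ k ≤ (Real.exp 1) ^ k := pow_le_pow_left₀ (by norm_num) h2e k
      _ = Real.exp k := by rw [← Real.exp_nat_mul, mul_one]
  have step3 : ((2 ^ n * 2 ^ n * 2 ^ r : ℕ) : ENNReal) ≤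
      ENNReal.ofReal (Real.exp ((n : ℝ) + n + r)) := by
    rw [← ENNReal.ofReal_natCast]
    refine ENNReal.ofReal_le_ofReal ?_
    push_cast
    rw [Real.exp_add, Real.exp_add]
    have h1 := hpow n
    have h3 := hpow r
    have e1 : (0 : ℝ) ≤ 2 ^ n := by positivity
    have e2 : (0 : ℝ) ≤ Real.exp (n : ℝ) := Real.exp_nonneg _
    have e3 : (0 : ℝ) ≤ 2 ^ r := by positivity
    exact mul_le_mul (mul_le_mul h1 h1 e1 e2) h3 e3 (by positivity)
  calc ((2 ^ n * 2 ^ n * 2 ^ r : ℕ) : ENNReal) * (1 - ENNReal.ofReal w) ^ m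
      ≤ ENNReal.ofReal (Real.exp ((n : ℝ) + n + r)) *
        ENNReal.ofReal (Real.exp ((m : ℝ) * (-w))) := mul_le_mul' step3 step2
    _ = ENNReal.ofReal (Real.exp ((n : ℝ) + n + r) * Real.exp ((m : ℝ) * (-w))) :=
        (ENNReal.ofReal_mul (Real.exp_nonneg _)).symm
    _ ≤ ENNReal.ofReal (Real.exp (-(n : ℝ))) := by
        refine ENNReal.ofReal_le_ofReal ?_
        rw [← Real.exp_add]
        refine Real.exp_le_exp.mpr ?_
        have : (m : ℝ) * (-w) = -(w * m) := by ring
        rw [this]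
        linarith

/-- The fixed-`n` probability estimate. -/
lemma fixed_n_estimate {n r s : ℕ} {p ε : ℝ} (h0 : 0 ≤ p) (h1 : p ≤ 1) (hr : r ≠ 0)
    (hnr : n ≤ r) (hs1 : 1 ≤ s) (hsn : s ≤ n)
    (hL : (1 - ε) * n ≤ (n : ℝ) - 2 * s)
    (hws : 3 * (n : ℝ) + r ≤ (p * (((r : ℝ) - n) / r)) * ((s * s : ℕ) : ℝ)) :
    1 - ENNReal.ofReal (Real.exp (-(n : ℝ))) ≤
      (graphMeasure n p).prod (colourMeasure n r)
        {ω | HasRainbowPath (graphOf ω.1) ω.2 ((1 - ε) * n)} ∧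
      (graphMeasure n p).prod (colourMeasure n r)
        {ω | HasRainbowPath (graphOf ω.1) ω.2 ((1 - ε) * n)} ≤ 1 := by
  haveI := graphM_prob (n := n) h0 h1
  haveI := colourM_prob (n := n) (r := r) hr
  haveI : IsProbabilityMeasure ((graphMeasure n p).prod (colourMeasure n r)) := inferInstance
  have hw0 : 0 ≤ p * (((r : ℝ) - n) / r) := by
    have : (n : ℝ) ≤ r := by exact_mod_cast hnr
    have hrpos : (0 : ℝ) < r := by
      have : 0 < r := Nat.pos_of_ne_zero hr
      exact_mod_cast this
    exact mul_nonneg h0 (div_nonneg (by linarith) (by linarith))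
  have hGsub := goodEvent_subset (r := r) hs1 hsn hL
  have hcompl := (good_compl_bound (s := s) h0 h1 hr hnr).trans
    (ennreal_union_to_exp (m := s * s) hw0 hws)
  refine ⟨?_, prob_le_one⟩
  calc 1 - ENNReal.ofReal (Real.exp (-(n : ℝ)))
      ≤ 1 - (graphMeasure n p).prod (colourMeasure n r) ((GoodEvent n r s)ᶜ) :=
        tsub_le_tsub_left hcompl 1
    _ = (graphMeasure n p).prod (colourMeasure n r) (GoodEvent n r s) := by
        have hmeas : MeasurableSet (GoodEvent n r s) :=
          (Set.to_countable _).measurableSet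
        have hadd := measure_add_measure_compl (μ :=
          (graphMeasure n p).prod (colourMeasure n r)) hmeas
        rw [measure_univ] at hadd
        exact (ENNReal.eq_sub_of_add_eq (measure_ne_top _ _) hadd).symm
    _ ≤ _ := measure_mono hGsub

/-! ### Main theorem -/

theorem rainbow_path_random_graph (α ε : ℝ) (hα : 0 < α) (hε : 0 < ε) :
    ∃ K : ℝ,
      Filter.Tendsto
        (fun n =>
          ((graphMeasure n (K / n)).prod (colourMeasure n ⌈(1 + α) * (n : ℝ)⌉₊))
            {ω | HasRainbowPath (graphOf ω.1) ω.2 ((1 - ε) * n)})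
        Filter.atTop (nhds 1) := by
  classical
  set ε' := min ε 1 with hε'def
  have hε'0 : 0 < ε' := lt_min hε one_pos
  have hε'1 : ε' ≤ 1 := min_le_right _ _
  have hε'ε : ε' ≤ ε := min_le_left _ _
  have hα1 : (0 : ℝ) < 1 + α := by linarith
  set K := 256 * (1 + α) ^ 2 / (α * ε' ^ 2) with hKdef
  have hK0 : 0 < K := by positivity
  refine ⟨K, ?_⟩
  have key : ∀ᶠ (n : ℕ) in Filter.atTop,
      1 - ENNReal.ofReal (Real.exp (-(n : ℝ))) ≤
        ((graphMeasure n (K / n)).prod (colourMeasure n ⌈(1 + α) * (n : ℝ)⌉₊))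
          {ω | HasRainbowPath (graphOf ω.1) ω.2 ((1 - ε) * n)} ∧
      ((graphMeasure n (K / n)).prod (colourMeasure n ⌈(1 + α) * (n : ℝ)⌉₊))
          {ω | HasRainbowPath (graphOf ω.1) ω.2 ((1 - ε) * n)} ≤ 1 := by
    rw [Filter.eventually_atTop]
    refine ⟨max 1 (max ⌈K⌉₊ ⌈4 / ε'⌉₊), fun n hn => ?_⟩
    have hn1 : 1 ≤ n := le_trans (le_max_left _ _) hn
    have hn1R : (1 : ℝ) ≤ n := by exact_mod_cast hn1
    have hn0R : (0 : ℝ) < n := by linarith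
    have hnK : K ≤ n := by
      have h1 : ⌈K⌉₊ ≤ n := le_trans (le_trans (le_max_left _ _) (le_max_right _ _)) hn
      exact le_trans (Nat.le_ceil K) (by exact_mod_cast h1)
    have hn4 : 4 / ε' ≤ n := by
      have h1 : ⌈4 / ε'⌉₊ ≤ n := le_trans (le_trans (le_max_right _ _) (le_max_right _ _)) hn
      exact le_trans (Nat.le_ceil _) (by exact_mod_cast h1)
    have hn4' : 4 ≤ ε' * n := by
      rw [div_le_iff₀ hε'0] at hn4
      linarith [hn4]
    have hp0 : 0 ≤ K / (n : ℝ) := by positivity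
    have hp1 : K / (n : ℝ) ≤ 1 := by
      rw [div_le_one hn0R]; exact hnK
    have hr_lb : (1 + α) * n ≤ (⌈(1 + α) * (n : ℝ)⌉₊ : ℝ) := Nat.le_ceil _
    have hr_ub : (⌈(1 + α) * (n : ℝ)⌉₊ : ℝ) ≤ (1 + α) * n + 1 :=
      le_of_lt (Nat.ceil_lt_add_one (by positivity))
    have hnrR : (n : ℝ) ≤ (⌈(1 + α) * (n : ℝ)⌉₊ : ℝ) := by nlinarith
    have hnr : n ≤ ⌈(1 + α) * (n : ℝ)⌉₊ := by exact_mod_cast hnrR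
    have hr0 : ⌈(1 + α) * (n : ℝ)⌉₊ ≠ 0 := by omega
    have hs_le : ((⌊ε' * n / 2⌋₊ : ℕ) : ℝ) ≤ ε' * n / 2 := Nat.floor_le (by positivity)
    have hs_ge : ε' * n / 4 ≤ ((⌊ε' * n / 2⌋₊ : ℕ) : ℝ) := by
      have := Nat.lt_floor_add_one (ε' * n / 2)
      linarith
    have hs1 : 1 ≤ ⌊ε' * n / 2⌋₊ := by
      have : (1 : ℝ) ≤ ((⌊ε' * n / 2⌋₊ : ℕ) : ℝ) := by linarith
      exact_mod_cast this
    have hsn : ⌊ε' * n / 2⌋₊ ≤ n := by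
      have : ((⌊ε' * n / 2⌋₊ : ℕ) : ℝ) ≤ (n : ℝ) := by nlinarith
      exact_mod_cast this
    refine fixed_n_estimate hp0 hp1 hr0 hnr hs1 hsn ?_ ?_
    · nlinarith
    · have hws := ws_bound (z := ((⌊ε' * n / 2⌋₊ : ℕ) : ℝ)) hα hε'0 hε'1 hKdef
        hn1R hr_lb hr_ub hs_ge hn4'
      have hcast : ((⌊ε' * n / 2⌋₊ * ⌊ε' * n / 2⌋₊ : ℕ) : ℝ) =
          ((⌊ε' * n / 2⌋₊ : ℕ) : ℝ) * ((⌊ε' * n / 2⌋₊ : ℕ) : ℝ) := by push_cast; ring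
      rw [hcast]
      exact hws
  have hb : Filter.Tendsto (fun n : ℕ => 1 - ENNReal.ofReal (Real.exp (-(n : ℝ))))
      Filter.atTop (nhds 1) := by
    have h1 : Filter.Tendsto (fun n : ℕ => ENNReal.ofReal (Real.exp (-(n : ℝ))))
        Filter.atTop (nhds 0) := by
      rw [← ENNReal.ofReal_zero]
      refine ENNReal.tendsto_ofReal ?_
      refine Real.tendsto_exp_atBot.comp ?_
      exact Filter.tendsto_neg_atBot_iff.mpr tendsto_natCast_atTop_atTop
    have h2 := ENNReal.Tendsto.sub (tendsto_const_nhds (x := (1 : ENNReal)))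
      h1 (Or.inl (by norm_num))
    simpa using h2
  exact tendsto_of_tendsto_of_tendsto_of_le_of_le' hb tendsto_const_nhds
    (key.mono fun n h => h.1) (key.mono fun n h => h.2)
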